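/- For all vectors x, y, z in ℝ², the quantity ((x-y)·(x-z))/|x-y| + ((z-y)·(z-x))/|z-y| is nonnegative (where the terms are interpreted as 0 when the denominators vanish). -/

import Mathlib

/-- For all x, y, z in ℝ², ((x-y)·(x-z))/|x-y| + ((z-y)·(z-x))/|z-y| ≥ 0
(terms interpreted as 0 when denominators vanish, which matches Lean's
division-by-zero convention since the numerators also vanish then). -/
theorem stmt_0 (x y z : EuclideanSpace ℝ (Fin 2)) :
    0 ≤ (inner ℝ (x - y) (x - z) : ℝ) / ‖x - y‖ + (inner ℝ (z - y) (z - x) : ℝ) / ‖z - y‖ := by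
  rcases eq_or_ne x y with rfl | hxy
  · simp only [sub_self, inner_zero_left, zero_div, zero_add]
    rw [real_inner_self_eq_norm_sq]
    positivity
  rcases eq_or_ne z y with rfl | hzy
  · simp only [sub_self, inner_zero_left, zero_div, add_zero]
    rw [real_inner_self_eq_norm_sq]
    positivity
  have hna : (0:ℝ) < ‖x - y‖ := by simpa [sub_eq_zero] using hxy
  have hnb : (0:ℝ) < ‖z - y‖ := by simpa [sub_eq_zero] using hzy
  have h1 : x - z = (x - y) - (z - y) := by abel
  have h2 : z - x = (z - y) - (x - y) := by abel
  have e1 : (inner ℝ (x - y) (x - z) : ℝ) = ‖x - y‖ ^ 2 - inner ℝ (x - y) (z - y) := by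
    rw [h1, inner_sub_right, real_inner_self_eq_norm_sq]
  have e2 : (inner ℝ (z - y) (z - x) : ℝ) = ‖z - y‖ ^ 2 - inner ℝ (x - y) (z - y) := by
    rw [h2, inner_sub_right, real_inner_self_eq_norm_sq, real_inner_comm]
  rw [e1, e2]
  have ht : (inner ℝ (x - y) (z - y) : ℝ) ≤ ‖x - y‖ * ‖z - y‖ := real_inner_le_norm _ _
  rw [div_add_div _ _ (ne_of_gt hna) (ne_of_gt hnb)]
  apply div_nonneg _ (by positivity)
  nlinarith [hna, hnb, ht]
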